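/- Let R be an integral domain and X an indeterminate over R. Then the polynomial ring R[X] is a big ideal domain if and only if R is a field. -/

import Mathlib

/-- An ideal `I` of a commutative ring `R` is a *big ideal* if whenever `J ⊊ I`,
`J ^ n ⊊ I ^ n` for every positive integer `n`. -/
def Ideal.IsBig {R : Type*} [CommRing R] (I : Ideal R) : Prop :=
  ∀ J : Ideal R, J < I → ∀ n : ℕ, 1 ≤ n → J ^ n < I ^ n

/-- A commutative ring is a *big ideal ring* if every ideal is a big ideal. -/
def IsBigIdealRing (R : Type*) [CommRing R] : Prop :=
  ∀ I : Ideal R, I.IsBig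

open Polynomial

/-- **Theorem 2.11 (polynomial case).** Let `R` be an integral domain and `X` an
indeterminate over `R`.  Then `R[X]` is a big ideal domain if and only if `R` is a field. -/
theorem isBigIdealRing_polynomial_iff_isField (R : Type*) [CommRing R] [IsDomain R] :
    IsBigIdealRing (Polynomial R) ↔ IsField R := by
  constructor
  · -- forward direction
    intro hbig
    refine ⟨exists_pair_ne R, mul_comm, ?_⟩
    intro a ha
    -- the big-ideal counterexample
    set b : R[X] := C a with hb
    set S : Set R[X] := {b ^ 4, b ^ 3 * X, b * X ^ 3, X ^ 4} with hS
    set J : Ideal R[X] := Ideal.span S with hJ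
    set m : R[X] := b ^ 2 * X ^ 2 with hm
    set I : Ideal R[X] := J ⊔ Ideal.span {m} with hI
    have hmemS : ∀ x ∈ S, x ∈ J := fun x hx => Ideal.subset_span hx
    have h1 : b ^ 4 ∈ J := hmemS _ (by simp [hS])
    have h2 : b ^ 3 * X ∈ J := hmemS _ (by simp [hS])
    have h3 : b * X ^ 3 ∈ J := hmemS _ (by simp [hS])
    have h4 : (X : R[X]) ^ 4 ∈ J := hmemS _ (by simp [hS])
    -- m * J ≤ J ^ 2
    have hmJ : Ideal.span {m} * J ≤ J ^ 2 := by
      rw [Ideal.span_singleton_mul_le_iff]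
      intro z hz
      rw [pow_two]
      refine Submodule.span_induction ?_ ?_ ?_ ?_ hz
      · intro x hx
        rcases hx with rfl | rfl | rfl | rfl
        · have : m * b ^ 4 = (b ^ 3 * X) * (b ^ 3 * X) := by rw [hm]; ring
          rw [this]; exact Ideal.mul_mem_mul h2 h2
        · have : m * (b ^ 3 * X) = b ^ 4 * (b * X ^ 3) := by rw [hm]; ring
          rw [this]; exact Ideal.mul_mem_mul h1 h3
        · have : m * (b * X ^ 3) = (b ^ 3 * X) * X ^ 4 := by rw [hm]; ring
          rw [this]; exact Ideal.mul_mem_mul h2 h4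
        · have : m * X ^ 4 = (b * X ^ 3) * (b * X ^ 3) := by rw [hm]; ring
          rw [this]; exact Ideal.mul_mem_mul h3 h3
      · simp
      · intro x y hx hy px py
        rw [mul_add]; exact Ideal.add_mem _ px py
      · intro c x hx px
        rw [smul_eq_mul, ← mul_assoc, mul_comm m c, mul_assoc]
        exact Ideal.mul_mem_left _ c px
    have hmm : Ideal.span {m} * Ideal.span {m} ≤ J ^ 2 := by
      rw [Ideal.span_singleton_mul_span_singleton, Ideal.span_singleton_le_iff_mem]
      have : m * m = b ^ 4 * X ^ 4 := by rw [hm]; ring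
      rw [pow_two, this]
      exact Ideal.mul_mem_mul h1 h4
    -- I ^ 2 = J ^ 2
    have hsq : I ^ 2 = J ^ 2 := by
      refine le_antisymm ?_ (Ideal.pow_right_mono le_sup_left 2)
      rw [pow_two, hI, Ideal.sup_mul, Ideal.mul_sup, Ideal.mul_sup]
      have hJm : J * Ideal.span {m} ≤ J ^ 2 := by rw [mul_comm]; exact hmJ
      exact sup_le (sup_le (le_of_eq (pow_two J).symm) hJm) (sup_le hmJ hmm)
    -- J is not strictly below I
    have hJI : ¬ J < I := by
      intro hlt
      have := hbig I J hlt 2 one_le_two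
      rw [hsq] at this
      exact lt_irrefl _ this
    have hIJ : I = J := by
      rcases lt_or_eq_of_le (le_sup_left : J ≤ I) with h | h
      · exact absurd h hJI
      · exact h.symm
    -- hence m ∈ J, extract a unit
    have hmJ' : m ∈ J := by
      rw [← hIJ]
      exact Submodule.mem_sup_right (Ideal.mem_span_singleton_self m)
    -- J ≤ (C a^3) ⊔ (X^3)
    have hJle : J ≤ Ideal.span {C (a ^ 3)} ⊔ Ideal.span {(X : R[X]) ^ 3} := by
      rw [hJ, Ideal.span_le]
      rintro x (rfl | rfl | rfl | rfl)
      · exact Submodule.mem_sup_left (Ideal.mem_span_singleton.mpr ⟨C a, by rw [hb, C_pow, pow_succ]⟩)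
      · exact Submodule.mem_sup_left (Ideal.mem_span_singleton.mpr ⟨X, by rw [hb, C_pow]⟩)
      · exact Submodule.mem_sup_right (Ideal.mem_span_singleton.mpr ⟨b, by ring⟩)
      · exact Submodule.mem_sup_right (Ideal.mem_span_singleton.mpr ⟨X, by ring⟩)
    obtain ⟨p, hp, q, hq, hpq⟩ := Submodule.mem_sup.mp (hJle hmJ')
    obtain ⟨f, rfl⟩ := Ideal.mem_span_singleton.mp hp
    obtain ⟨g, rfl⟩ := Ideal.mem_span_singleton.mp hq
    -- compare coefficients of X^2
    have hcoeff := congrArg (fun p : R[X] => p.coeff 2) hpq.symm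
    simp only [hm, hb, ← C_pow, coeff_add, coeff_C_mul, mul_comm ((X : R[X]) ^ 3) g,
      coeff_mul_X_pow', coeff_X_pow] at hcoeff
    norm_num at hcoeff
    rw [← C_pow, coeff_C_zero] at hcoeff
    -- hcoeff : a ^ 2 = a ^ 3 * f.coeff 2
    have ha2 : (a ^ 2 : R) ≠ 0 := pow_ne_zero _ ha
    have : a ^ 2 * 1 = a ^ 2 * (a * f.coeff 2) := by
      linear_combination hcoeff
    have h1a : 1 = a * f.coeff 2 := mul_left_cancel₀ ha2 this
    exact ⟨f.coeff 2, h1a.symm⟩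
  · -- reverse direction
    intro hF
    letI : Field R := hF.toField
    intro I J hJI n hn
    obtain ⟨f, hf⟩ : Submodule.IsPrincipal I := IsPrincipalIdealRing.principal I
    have hf' : I = Ideal.span {f} := by rw [hf]
    have hfne : f ≠ 0 := by
      rintro rfl
      rw [hf', Ideal.span_singleton_eq_bot.mpr rfl] at hJI
      exact not_lt_bot hJI
    obtain ⟨g, hg⟩ : Submodule.IsPrincipal J := IsPrincipalIdealRing.principal J
    have hg' : J = Ideal.span {g} := by rw [hg]
    obtain ⟨c, rfl⟩ : f ∣ g := by
      rw [← Ideal.mem_span_singleton, ← hf']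
      exact hJI.le (hg' ▸ Ideal.mem_span_singleton_self g)
    have hc : ¬ IsUnit c := by
      intro hc
      exact hJI.ne (by
        rw [hg', hf']
        exact Ideal.span_singleton_eq_span_singleton.mpr ⟨hc.unit⁻¹, by
          simp [mul_assoc]⟩)
    refine lt_of_le_of_ne (Ideal.pow_right_mono hJI.le n) ?_
    intro heq
    rw [hg', hf', Ideal.span_singleton_pow, Ideal.span_singleton_pow] at heq
    obtain ⟨u, hu⟩ := (Ideal.span_singleton_eq_span_singleton.mp heq)
    rw [mul_pow, mul_assoc] at hu
    have : c ^ n * (u : R[X]) = 1 :=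
      mul_left_cancel₀ (pow_ne_zero n hfne) (by rw [mul_one]; exact hu)
    obtain ⟨p, rfl⟩ : ∃ p, n = p + 1 := ⟨n - 1, (Nat.succ_pred_eq_of_pos hn).symm⟩
    rw [pow_succ, mul_comm _ c, mul_assoc] at this
    exact hc (IsUnit.of_mul_eq_one _ this)
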